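/- Let f₁(t) = a₁ e^{k₁ t} + b₁ and f₃(t) = a₃ e^{k₃ t} + b₃ with a₁, a₃ ≠ 0 and k₁, k₃ < 0. If f₁ and f₃ agree at three distinct points c₁ < c₂ < c₃, then f₁ = f₃ identically. -/

import Mathlib

theorem stmt_6 (a₁ a₃ b₁ b₃ k₁ k₃ c₁ c₂ c₃ : ℝ)
    (ha₁ : a₁ ≠ 0) (ha₃ : a₃ ≠ 0) (hk₁ : k₁ < 0) (hk₃ : k₃ < 0)
    (hc12 : c₁ < c₂) (hc23 : c₂ < c₃)
    (h1 : a₁ * Real.exp (k₁ * c₁) + b₁ = a₃ * Real.exp (k₃ * c₁) + b₃)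
    (h2 : a₁ * Real.exp (k₁ * c₂) + b₁ = a₃ * Real.exp (k₃ * c₂) + b₃)
    (h3 : a₁ * Real.exp (k₁ * c₃) + b₁ = a₃ * Real.exp (k₃ * c₃) + b₃) :
    ∀ t : ℝ, a₁ * Real.exp (k₁ * t) + b₁ = a₃ * Real.exp (k₃ * t) + b₃ := by
  -- first show k₁ = k₃ using Rolle's theorem
  set g : ℝ → ℝ := fun t => a₁ * Real.exp (k₁ * t) - a₃ * Real.exp (k₃ * t) + (b₁ - b₃) with hg
  have hderiv : ∀ x : ℝ, HasDerivAt g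
      (a₁ * (k₁ * Real.exp (k₁ * x)) - a₃ * (k₃ * Real.exp (k₃ * x))) x := by
    intro x
    have h1 : HasDerivAt (fun t : ℝ => Real.exp (k₁ * t)) (Real.exp (k₁ * x) * k₁) x := by
      simpa using ((hasDerivAt_id x).const_mul k₁).exp
    have h2 : HasDerivAt (fun t : ℝ => Real.exp (k₃ * t)) (Real.exp (k₃ * x) * k₃) x := by
      simpa using ((hasDerivAt_id x).const_mul k₃).exp
    have := ((h1.const_mul a₁).sub (h2.const_mul a₃)).add_const (b₁ - b₃)
    exact this.congr_deriv (by ring)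
  have hcont : ∀ s : Set ℝ, ContinuousOn g s := fun s =>
    (Continuous.continuousOn (by fun_prop))
  have hg12 : g c₁ = g c₂ := by simp only [hg]; linarith
  have hg23 : g c₂ = g c₃ := by simp only [hg]; linarith
  obtain ⟨t₁, ht₁, hdt₁⟩ := exists_hasDerivAt_eq_zero hc12 (hcont _) hg12
    (fun x _ => hderiv x)
  obtain ⟨t₂, ht₂, hdt₂⟩ := exists_hasDerivAt_eq_zero hc23 (hcont _) hg23
    (fun x _ => hderiv x)
  have ht12 : t₁ < t₂ := lt_trans ht₁.2 ht₂.1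
  have key : ∀ t : ℝ, a₁ * (k₁ * Real.exp (k₁ * t)) - a₃ * (k₃ * Real.exp (k₃ * t)) = 0 →
      a₁ * k₁ * Real.exp ((k₁ - k₃) * t) = a₃ * k₃ := by
    intro t ht
    have hpos : Real.exp (k₃ * t) ≠ 0 := (Real.exp_pos _).ne'
    have : a₁ * k₁ * Real.exp ((k₁ - k₃) * t) * Real.exp (k₃ * t)
        = a₃ * k₃ * Real.exp (k₃ * t) := by
      rw [mul_assoc, ← Real.exp_add, show (k₁ - k₃) * t + k₃ * t = k₁ * t by ring]
      linarith
    exact mul_right_cancel₀ hpos this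
  have k1 := key t₁ hdt₁
  have k2 := key t₂ hdt₂
  have ha₁k : a₁ * k₁ ≠ 0 := mul_ne_zero ha₁ hk₁.ne
  have hexp_eq : Real.exp ((k₁ - k₃) * t₁) = Real.exp ((k₁ - k₃) * t₂) := by
    have := k1.trans k2.symm
    exact mul_left_cancel₀ ha₁k this
  have hkk : k₁ = k₃ := by
    have := Real.exp_injective hexp_eq
    have h0 : (k₁ - k₃) * (t₁ - t₂) = 0 := by linarith
    rcases mul_eq_zero.mp h0 with h | h
    · linarith
    · exfalso; linarith
  subst hkk
  -- now a₁ = a₃ and b₁ = b₃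
  have hexpne : Real.exp (k₁ * c₁) ≠ Real.exp (k₁ * c₂) := by
    intro h
    have := Real.exp_injective h
    have : k₁ * (c₁ - c₂) = 0 := by linarith
    rcases mul_eq_zero.mp this with h | h
    · exact hk₁.ne h
    · linarith
  have ha : a₁ = a₃ := by
    by_contra hne
    have : (a₁ - a₃) * (Real.exp (k₁ * c₁) - Real.exp (k₁ * c₂)) = 0 := by linarith
    rcases mul_eq_zero.mp this with h | h
    · exact hne (by linarith)
    · exact hexpne (by linarith)
  subst ha
  have hb : b₁ = b₃ := by
    have := h1
    nlinarith [Real.exp_pos (k₁ * c₁)]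
  intro t
  rw [hb]
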